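/- Let δ > 0 and define the Lyapunov function V_2 : S → ℝ by V_2(X) := (Σ_{i=1}^d X_i/n)·1(q_1 > λ + δ), where q_1 = B(X)/n. Then for every state X of the greedy limited-access chain satisfying q_1 > λ + δ + d/n, the generator drift satisfies G V_2(X) ≤ −δ. (Lemma 5, drift part, with the precise condition q_1 > λ + δ + d/n ensuring the indicator is unchanged by any single transition.) -/

import Mathlib

open Finset

/-- `busy d X` is the number of busy servers in state `X`, where `X i`
(for `1 ≤ i ≤ d`) is the number of jobs being processed on `i` servers
simultaneously (coordinate `0` is unused). -/
def busy (d : ℕ) (X : Fin (d + 1) → ℕ) : ℕ :=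
  ∑ i : Fin (d + 1), i.1 * X i

/-- The finite state space `S`: coordinate `0` is zero and at most `n` servers busy. -/
def stateSpace (n d : ℕ) : Finset (Fin (d + 1) → ℕ) :=
  (Fintype.piFinset fun _ : Fin (d + 1) => Finset.range (n + 1)).filter
    fun X => busy d X ≤ n ∧ X 0 = 0

/-- Expectation of `g` under a measure `π` supported on the state space. -/
noncomputable def expec (n d : ℕ) (π g : (Fin (d + 1) → ℕ) → ℝ) : ℝ :=
  ∑ X ∈ stateSpace n d, π X * g X

/-- `π` is a probability distribution on the state space. -/
def IsProbOn (n d : ℕ) (π : (Fin (d + 1) → ℕ) → ℝ) : Prop :=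
  (∀ X, 0 ≤ π X) ∧ (∑ X ∈ stateSpace n d, π X = 1) ∧
    ∀ X, X ∉ stateSpace n d → π X = 0

/-- Total number of jobs `∑_{i=1}^d X_i` in state `X`. -/
def jobs (d : ℕ) (X : Fin (d + 1) → ℕ) : ℕ :=
  ∑ i : Fin (d + 1), if 0 < i.1 then X i else 0

/-- Number of jobs occupying fewer than `d` servers, `∑_{i=1}^{d-1} X_i`. -/
def jobsLow (d : ℕ) (X : Fin (d + 1) → ℕ) : ℕ :=
  ∑ i : Fin (d + 1), if 0 < i.1 ∧ i.1 < d then X i else 0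

/-- Sampling probabilities `A_i(X)` for `0 ≤ i ≤ d`: for `i < d`, the hypergeometric
probability `C(I,i)·C(B,k−i)/C(n,k)` that exactly `i` of the `k` uniformly sampled
servers are idle; for `i = d`, the probability `1 − ∑_{j<d} A_j(X)` that at least `d`
sampled servers are idle. -/
noncomputable def Asamp (n d k : ℕ) (X : Fin (d + 1) → ℕ) (i : ℕ) : ℝ :=
  if i < d then
    ((n - busy d X).choose i * (busy d X).choose (k - i) : ℝ) / (n.choose k : ℝ)
  else
    1 - ∑ j ∈ Finset.range d,
        ((n - busy d X).choose j * (busy d X).choose (k - j) : ℝ) / (n.choose k : ℝ)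

/-- Generator of the greedy limited-access chain:
`G f(X) = nλ·∑_{i=1}^d A_i(X)·(f(X+e_i) − f(X)) + ∑_{i=1}^d i·X_i·(f(X−e_i) − f(X))`. -/
noncomputable def Glim (n d k : ℕ) (lam : ℝ) (f : (Fin (d + 1) → ℕ) → ℝ)
    (X : Fin (d + 1) → ℕ) : ℝ :=
  (n : ℝ) * lam * ∑ i : Fin (d + 1),
      (if i.1 = 0 then 0 else Asamp n d k X i.1) * (f (X + Pi.single i 1) - f X) +
    ∑ i : Fin (d + 1), (i.1 * X i : ℝ) * (f (X - Pi.single i 1) - f X)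

/-- `π` is a stationary distribution of the greedy limited-access chain. -/
def IsStationaryLim (n d k : ℕ) (lam : ℝ) (π : (Fin (d + 1) → ℕ) → ℝ) : Prop :=
  ∀ f : (Fin (d + 1) → ℕ) → ℝ, ∑ X ∈ stateSpace n d, π X * Glim n d k lam f X = 0

/-- Generator of the greedy full-access chain (the case `k = n`):
`G f(X) = nλ·[1(I(X) ≥ d)·(f(X+e_d) − f(X)) + ∑_{j=1}^{d−1} 1(I(X) = j)·(f(X+e_j) − f(X))]
  + ∑_{i=1}^d i·X_i·(f(X−e_i) − f(X))`, where `I(X) = n − busy d X`. -/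
noncomputable def Gfull (n d : ℕ) (lam : ℝ) (f : (Fin (d + 1) → ℕ) → ℝ)
    (X : Fin (d + 1) → ℕ) : ℝ :=
  (n : ℝ) * lam *
      ((if d ≤ n - busy d X then (1 : ℝ) else 0) *
          (f (X + Pi.single (Fin.last d) 1) - f X) +
        ∑ j : Fin (d + 1),
          (if 0 < j.1 ∧ j.1 < d ∧ n - busy d X = j.1 then (1 : ℝ) else 0) *
            (f (X + Pi.single j 1) - f X)) +
    ∑ i : Fin (d + 1), (i.1 * X i : ℝ) * (f (X - Pi.single i 1) - f X)

/-- `π` is a stationary distribution of the greedy full-access chain. -/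
def IsStationaryFull (n d : ℕ) (lam : ℝ) (π : (Fin (d + 1) → ℕ) → ℝ) : Prop :=
  ∀ f : (Fin (d + 1) → ℕ) → ℝ, ∑ X ∈ stateSpace n d, π X * Gfull n d lam f X = 0


/-- Lemma 5, drift part: for `δ > 0` and the Lyapunov function
`V₂(X) = (∑_{i=1}^d X_i/n)·1(q₁ > λ + δ)`, every state `X` of the greedy limited-access
chain with `q₁ > λ + δ + d/n` satisfies `G V₂(X) ≤ −δ`. -/
lemma busy_add' (d : ℕ) (X : Fin (d+1) → ℕ) (i : Fin (d+1)) :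
    busy d (X + Pi.single i 1) = busy d X + i.1 := by
  unfold busy
  simp only [Pi.add_apply, Pi.single_apply, Nat.mul_add, Finset.sum_add_distrib,
    mul_ite, mul_one, mul_zero, Finset.sum_ite_eq', Finset.mem_univ, if_true]

lemma jobs_add' (d : ℕ) (X : Fin (d+1) → ℕ) (i : Fin (d+1)) (hi : i.1 ≠ 0) :
    jobs d (X + Pi.single i 1) = jobs d X + 1 := by
  unfold jobs
  have h : ∀ j : Fin (d+1), (if 0 < j.1 then X j + Pi.single (M := fun _ : Fin (d+1) => ℕ) i 1 j else 0)
      = (if 0 < j.1 then X j else 0) + (if j = i then 1 else 0) := by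
    intro j
    by_cases hji : j = i
    · subst hji; simp [Pi.single_apply, Nat.pos_of_ne_zero hi]
    · simp [Pi.single_apply, hji]
  simp only [Pi.add_apply]
  rw [Finset.sum_congr rfl fun j _ => h j, Finset.sum_add_distrib,
    Finset.sum_ite_eq' Finset.univ i]
  simp

lemma sub_add_single (d : ℕ) (X : Fin (d+1) → ℕ) (i : Fin (d+1)) (h : 1 ≤ X i) :
    X - Pi.single i 1 + Pi.single i 1 = X := by
  funext j
  by_cases hji : j = i
  · subst hji
    simp only [Pi.add_apply, Pi.sub_apply, Pi.single_eq_same]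
    omega
  · simp [Pi.single_apply, hji]

lemma busy_sub' (d : ℕ) (X : Fin (d+1) → ℕ) (i : Fin (d+1)) (h : 1 ≤ X i) :
    busy d (X - Pi.single i 1) + i.1 = busy d X := by
  conv_rhs => rw [← sub_add_single d X i h]
  rw [busy_add']

lemma jobs_sub' (d : ℕ) (X : Fin (d+1) → ℕ) (i : Fin (d+1)) (hi : i.1 ≠ 0) (h : 1 ≤ X i) :
    jobs d (X - Pi.single i 1) + 1 = jobs d X := by
  conv_rhs => rw [← sub_add_single d X i h]
  rw [jobs_add' _ _ _ hi]

theorem stmt14 (n d k : ℕ) (hd : 1 ≤ d) (hdk : d ≤ k) (hkn : k ≤ n) (lam δ : ℝ)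
    (hlam0 : 0 ≤ lam) (hlam1 : lam ≤ 1) (hδ : 0 < δ) :
    ∀ X ∈ stateSpace n d, lam + δ + d / n < (busy d X : ℝ) / n →
      Glim n d k lam
          (fun Y => ((jobs d Y : ℝ) / n) *
            (if lam + δ < (busy d Y : ℝ) / n then (1 : ℝ) else 0)) X ≤ -δ := by
  intro X hX hq
  rcases Nat.eq_zero_or_pos n with hn0 | hn
  · exfalso
    subst hn0
    rw [Nat.cast_zero, div_zero, div_zero] at hq
    linarith
  have hnR : (0:ℝ) < n := by exact_mod_cast hn
  have hnne : (n:ℝ) ≠ 0 := ne_of_gt hnR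
  -- the indicator holds for any state within d of busy
  have hind : ∀ m : ℕ, busy d X ≤ m + d → lam + δ < (m:ℝ)/n := by
    intro m hm
    have h1 : (busy d X : ℝ)/n ≤ ((m:ℝ) + d)/n := by
      gcongr
      exact_mod_cast hm
    rw [add_div] at h1
    linarith
  -- d < busy d X
  have hdB : d < busy d X := by
    have h1 : (d:ℝ)/n < (busy d X : ℝ)/n := by nlinarith [div_nonneg (Nat.cast_nonneg (α := ℝ) d) hnR.le]
    have := (div_lt_div_iff_of_pos_right hnR).mp h1
    exact_mod_cast this
  simp only [Glim]
  -- first sum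
  have key1 : ∀ i : Fin (d+1),
      (if i.1 = 0 then (0:ℝ) else Asamp n d k X i.1) *
        (((jobs d (X + Pi.single i 1) : ℝ) / n) *
            (if lam + δ < (busy d (X + Pi.single i 1) : ℝ) / n then (1:ℝ) else 0)
          - ((jobs d X : ℝ) / n) *
            (if lam + δ < (busy d X : ℝ) / n then (1:ℝ) else 0))
      = (if i.1 = 0 then (0:ℝ) else Asamp n d k X i.1) * (1/n) := by
    intro i
    by_cases hi : i.1 = 0
    · simp [hi]
    · rw [jobs_add' d X i hi, busy_add' d X i]
      rw [if_pos (hind (busy d X) (by omega)), if_pos (hind (busy d X + i.1) (by omega))]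
      push_cast
      ring_nf
  have key2 : ∀ i : Fin (d+1),
      ((i.1 : ℝ) * X i) *
        (((jobs d (X - Pi.single i 1) : ℝ) / n) *
            (if lam + δ < (busy d (X - Pi.single i 1) : ℝ) / n then (1:ℝ) else 0)
          - ((jobs d X : ℝ) / n) *
            (if lam + δ < (busy d X : ℝ) / n then (1:ℝ) else 0))
      = ((i.1 : ℝ) * X i) * (-(1/n)) := by
    intro i
    by_cases hi : i.1 = 0
    · simp [hi]
    by_cases hXi : X i = 0
    · simp [hXi]
    have hXi1 : 1 ≤ X i := Nat.one_le_iff_ne_zero.mpr hXi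
    have hb := busy_sub' d X i hXi1
    have hj := jobs_sub' d X i hi hXi1
    have hid : i.1 ≤ d := by omega
    rw [if_pos (hind (busy d X) (by omega)), if_pos (hind (busy d (X - Pi.single i 1)) (by omega))]
    have hbR : (jobs d (X - Pi.single i 1) : ℝ) = (jobs d X : ℝ) - 1 := by
      have : ((jobs d (X - Pi.single i 1) + 1 : ℕ) : ℝ) = (jobs d X : ℝ) := by exact_mod_cast hj
      push_cast at this
      linarith
    rw [hbR]
    ring
  rw [Finset.sum_congr rfl fun i _ => key1 i, Finset.sum_congr rfl fun i _ => key2 i,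
    ← Finset.sum_mul, ← Finset.sum_mul]
  have hBsum : (∑ i : Fin (d+1), (i.1 : ℝ) * X i) = (busy d X : ℝ) := by
    rw [busy]
    push_cast
    ring
  rw [hBsum]
  -- bound the sampling sum
  set S := ∑ i : Fin (d+1), (if i.1 = 0 then (0:ℝ) else Asamp n d k X i.1) with hSdef
  have hS : S ≤ 1 := by
    rw [hSdef, Fin.sum_univ_eq_sum_range (fun j => if j = 0 then (0:ℝ) else Asamp n d k X j) (d+1),
      Finset.sum_range_succ]
    have hAd : Asamp n d k X d = 1 - ∑ j ∈ Finset.range d,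
        ((n - busy d X).choose j * (busy d X).choose (k - j) : ℝ) / (n.choose k : ℝ) := by
      rw [Asamp, if_neg (lt_irrefl d)]
    have hle : ∑ i ∈ Finset.range d, (if i = 0 then (0:ℝ) else Asamp n d k X i)
        ≤ ∑ j ∈ Finset.range d,
          ((n - busy d X).choose j * (busy d X).choose (k - j) : ℝ) / (n.choose k : ℝ) := by
      apply Finset.sum_le_sum
      intro i hi
      have hi' : i < d := Finset.mem_range.mp hi
      rw [Asamp, if_pos hi']
      split
      · positivity
      · exact le_refl _
    rw [if_neg (by omega : ¬ d = 0), hAd]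
    linarith
  have hSnn : (0:ℝ) ≤ 1 := zero_le_one
  have hfin : (n:ℝ) * lam * (S * (1/n)) = lam * S := by
    field_simp
  rw [hfin]
  have h2 : lam * S ≤ lam := by
    calc lam * S ≤ lam * 1 := by
          apply mul_le_mul_of_nonneg_left hS hlam0
      _ = lam := mul_one lam
  have hdn : (0:ℝ) ≤ (d:ℝ)/n := by positivity
  have hB : (busy d X : ℝ) * (-(1/n)) = -((busy d X:ℝ)/n) := by ring
  rw [hB]
  linarith
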